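/- Let f : [0,1]^d → [0,∞) be continuous and satisfy Assumption A, and let S = (S_1,…,S_d) be the inverse Knothe–Rosenblatt map of f. Then S is triangular (S_j depends only on x_{1:j}), for every j and every fixed x_{1:j-1} the map x_j ↦ S_j(x_{1:j-1}, x_j) is a strictly increasing bijection of [0,1] onto [0,1], S : [0,1]^d → [0,1]^d is a bijection, and for every x in the complement of the Lebesgue null set N_{d-1} := {x ∈ [0,1]^d : s_{d-1}(x_{1:d-1}) = 0}, the partial derivatives ∂_{x_j} S_j(x_{1:j}) exist and satisfy ∏_{j=1}^d ∂_{x_j} S_j(x_{1:j}) = f(x) / ∫_{[0,1]^d} f(y) dy. -/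

import Mathlib

open MeasureTheory

noncomputable section

def cube (d : ℕ) : Set (Fin d → ℝ) := Set.univ.pi fun _ => Set.Icc (0:ℝ) 1

noncomputable def sFun (d : ℕ) (f : (Fin d → ℝ) → ℝ) (j : ℕ) (x : Fin d → ℝ) : ℝ :=
  ∫ y in cube d, f (fun i => if (i : ℕ) < j then x i else y i)

noncomputable def KRinv (d : ℕ) (f : (Fin d → ℝ) → ℝ) (x : Fin d → ℝ) : Fin d → ℝ :=
  fun j => if 0 < sFun d f (j : ℕ) x
    then (∫ t in (0:ℝ)..(x j), sFun d f ((j : ℕ) + 1) (Function.update x j t)) / sFun d f (j : ℕ) x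
    else x j

def AssumptionA (d : ℕ) (f : (Fin d → ℝ) → ℝ) : Prop :=
  volume {x : Fin d → ℝ | x ∈ cube d ∧ f x = 0} = 0 ∧
  ∀ i : Fin d, ∀ x ∈ cube d,
    (∀ t ∈ Set.Icc (0:ℝ) 1, f (Function.update x i t) = 0) ∨
    volume {t : ℝ | t ∈ Set.Icc (0:ℝ) 1 ∧ f (Function.update x i t) = 0} = 0

/-! ### Basic facts about the cube -/

lemma measurableSet_cube (d : ℕ) : MeasurableSet (cube d) :=
  MeasurableSet.univ_pi fun _ => measurableSet_Icc

lemma isCompact_cube (d : ℕ) : IsCompact (cube d) :=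
  isCompact_univ_pi fun _ => isCompact_Icc

lemma volume_cube (d : ℕ) : volume (cube d) = 1 := by
  rw [cube, volume_pi_pi]; simp

lemma cube_eq_closure (d : ℕ) :
    cube d = closure (Set.univ.pi fun _ : Fin d => Set.Ioo (0:ℝ) 1) := by
  rw [closure_pi_set]; simp [cube, Function.comp]

lemma mem_cube {d : ℕ} {x : Fin d → ℝ} : x ∈ cube d ↔ ∀ i, x i ∈ Set.Icc (0:ℝ) 1 := by
  rw [cube, Set.mem_univ_pi]

/-! ### One-dimensional positivity lemmas -/

lemma pos1D {h : ℝ → ℝ} {a b : ℝ} (hab : a < b) (hc : ContinuousOn h (Set.Icc a b))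
    (hnn : ∀ s ∈ Set.Icc a b, 0 ≤ h s) {s0 : ℝ} (hs0 : s0 ∈ Set.Icc a b)
    (hpos : 0 < h s0) : 0 < ∫ s in Set.Icc a b, h s := by
  have hint : IntegrableOn h (Set.Icc a b) := hc.integrableOn_compact isCompact_Icc
  rw [setIntegral_pos_iff_support_of_nonneg_ae ?hnn hint]
  case hnn =>
    filter_upwards [ae_restrict_mem measurableSet_Icc] with s hs using hnn s hs
  · have hev : ∀ᶠ s in nhdsWithin s0 (Set.Icc a b), 0 < h s :=
      (hc s0 hs0).eventually (eventually_gt_nhds hpos)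
    rw [eventually_nhdsWithin_iff] at hev
    obtain ⟨ε, hε, hball⟩ := Metric.eventually_nhds_iff_ball.1 hev
    rcases lt_or_ge s0 b with hlt | hge
    · set b' := min b (s0 + ε/2) with hb'
      have hs0b' : s0 < b' := lt_min hlt (by linarith)
      have hsub : Set.Ioo s0 b' ⊆ Function.support h ∩ Set.Icc a b := by
        intro s hs
        have hsIcc : s ∈ Set.Icc a b :=
          ⟨hs0.1.trans hs.1.le, hs.2.le.trans (min_le_left _ _)⟩
        have hd : dist s s0 < ε := by
          rw [Real.dist_eq, abs_lt]
          constructor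
          · nlinarith [hs.1]
          · have := hs.2.trans_le (min_le_right _ _); linarith
        exact ⟨(hball s hd hsIcc).ne', hsIcc⟩
      calc (0:ENNReal) < volume (Set.Ioo s0 b') := by
            rw [Real.volume_Ioo]; exact ENNReal.ofReal_pos.2 (by linarith)
        _ ≤ _ := measure_mono hsub
    · have hs0b : s0 = b := le_antisymm hs0.2 hge
      set a' := max a (s0 - ε/2) with ha'
      have ha's0 : a' < s0 := max_lt (hs0b ▸ hab) (by linarith)
      have hsub : Set.Ioo a' s0 ⊆ Function.support h ∩ Set.Icc a b := by
        intro s hs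
        have hsIcc : s ∈ Set.Icc a b :=
          ⟨(le_max_left _ _).trans hs.1.le, hs.2.le.trans hs0.2⟩
        have hd : dist s s0 < ε := by
          rw [Real.dist_eq, abs_lt]
          constructor
          · have := (le_max_right a (s0 - ε/2)).trans_lt hs.1; linarith
          · linarith [hs.2]
        exact ⟨(hball s hd hsIcc).ne', hsIcc⟩
      calc (0:ENNReal) < volume (Set.Ioo a' s0) := by
            rw [Real.volume_Ioo]; exact ENNReal.ofReal_pos.2 (by linarith)
        _ ≤ _ := measure_mono hsub

lemma zero1D {h : ℝ → ℝ} {a b : ℝ} (hab : a < b) (hc : ContinuousOn h (Set.Icc a b))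
    (hnn : ∀ s ∈ Set.Icc a b, 0 ≤ h s) (hz : ∫ s in Set.Icc a b, h s = 0) :
    ∀ s ∈ Set.Icc a b, h s = 0 := by
  intro s hs
  by_contra hne
  have : 0 < h s := lt_of_le_of_ne (hnn s hs) (Ne.symm hne)
  exact absurd hz (ne_of_gt (pos1D hab hc hnn hs this))

/-! ### Positivity on the cube -/

lemma posCube {d : ℕ} {G : (Fin d → ℝ) → ℝ} (hc : ContinuousOn G (cube d))
    (hnn : ∀ y ∈ cube d, 0 ≤ G y) {x0 : Fin d → ℝ} (hx0 : x0 ∈ cube d)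
    (hpos : 0 < G x0) : 0 < ∫ y in cube d, G y := by
  have hint : IntegrableOn G (cube d) := hc.integrableOn_compact (isCompact_cube d)
  rw [setIntegral_pos_iff_support_of_nonneg_ae ?hnn hint]
  case hnn =>
    filter_upwards [ae_restrict_mem (measurableSet_cube d)] with y hy using hnn y hy
  have hev : ∀ᶠ y in nhdsWithin x0 (cube d), 0 < G y :=
    (hc x0 hx0).eventually (eventually_gt_nhds hpos)
  rw [eventually_nhdsWithin_iff] at hev
  obtain ⟨W, hWsub, hWopen, hWx0⟩ := eventually_nhds_iff.1 hev
  set V : Set (Fin d → ℝ) := Set.univ.pi fun _ => Set.Ioo (0:ℝ) 1 with hV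
  have hVopen : IsOpen V := isOpen_set_pi Set.finite_univ fun _ _ => isOpen_Ioo
  have hne : (W ∩ V).Nonempty := by
    have : x0 ∈ closure V := (cube_eq_closure d) ▸ hx0
    exact mem_closure_iff.1 this W hWopen hWx0
  have hWV : W ∩ V ⊆ Function.support G ∩ cube d := by
    intro y hy
    have hyc : y ∈ cube d := fun i hi => Set.Ioo_subset_Icc_self (hy.2 i hi)
    exact ⟨(hWsub y hy.1 hyc).ne', hyc⟩
  calc (0:ENNReal) < volume (W ∩ V) := (hWopen.inter hVopen).measure_pos volume hne
    _ ≤ _ := measure_mono hWV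

lemma zeroCube {d : ℕ} {G : (Fin d → ℝ) → ℝ} (hc : ContinuousOn G (cube d))
    (hnn : ∀ y ∈ cube d, 0 ≤ G y) (hz : ∫ y in cube d, G y = 0) :
    ∀ y ∈ cube d, G y = 0 := by
  intro y hy
  by_contra hne
  exact absurd hz (ne_of_gt (posCube hc hnn hy (lt_of_le_of_ne (hnn y hy) (Ne.symm hne))))

/-! ### Basic properties of sFun -/

section sFunBasic

variable {d : ℕ} {f : (Fin d → ℝ) → ℝ}

lemma mix_mem {j : ℕ} {x y : Fin d → ℝ} (hx : x ∈ cube d) (hy : y ∈ cube d) :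
    (fun i : Fin d => if (i : ℕ) < j then x i else y i) ∈ cube d := by
  rw [mem_cube]
  intro i
  by_cases h : (i:ℕ) < j
  · simpa [h] using mem_cube.1 hx i
  · simpa [h] using mem_cube.1 hy i

lemma mix_continuous (j : ℕ) (x : Fin d → ℝ) :
    Continuous (fun y : Fin d → ℝ => fun i : Fin d => if (i : ℕ) < j then x i else y i) := by
  apply continuous_pi
  intro i
  split
  · exact continuous_const
  · exact continuous_apply i

lemma mix_continuous' (j : ℕ) (y : Fin d → ℝ) :
    Continuous (fun x : Fin d → ℝ => fun i : Fin d => if (i : ℕ) < j then x i else y i) := by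
  apply continuous_pi
  intro i
  split
  · exact continuous_apply i
  · exact continuous_const

lemma sFun_congr {j : ℕ} {x y : Fin d → ℝ} (h : ∀ i : Fin d, (i : ℕ) < j → x i = y i) :
    sFun d f j x = sFun d f j y := by
  unfold sFun
  congr 1
  funext z
  congr 1
  funext i
  split
  · exact h i ‹_›
  · rfl

lemma sFun_update_of_le {j k : ℕ} (hjk : j ≤ k) (x : Fin d → ℝ) {i0 : Fin d}
    (hi0 : (i0 : ℕ) = k) (t : ℝ) :
    sFun d f j (Function.update x i0 t) = sFun d f j x := by
  apply sFun_congr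
  intro i hi
  have : i ≠ i0 := by intro h; subst h; omega
  rw [Function.update_of_ne this]

lemma integrandOn (hfc : ContinuousOn f (cube d)) {j : ℕ} {x : Fin d → ℝ} (hx : x ∈ cube d) :
    ContinuousOn (fun y => f (fun i => if (i : ℕ) < j then x i else y i)) (cube d) :=
  hfc.comp (mix_continuous j x).continuousOn (fun _ hy => mix_mem hx hy)

lemma sFun_nonneg (hfnn : ∀ x ∈ cube d, 0 ≤ f x)
    (j : ℕ) {x : Fin d → ℝ} (hx : x ∈ cube d) : 0 ≤ sFun d f j x :=
  setIntegral_nonneg (measurableSet_cube d) fun y hy => hfnn _ (mix_mem hx hy)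

lemma sFun_continuousOn (hfc : ContinuousOn f (cube d)) (j : ℕ) :
    ContinuousOn (sFun d f j) (cube d) := by
  obtain ⟨C, hC⟩ := (isCompact_cube d).exists_bound_of_continuousOn hfc
  intro x0 hx0
  apply continuousWithinAt_of_dominated (bound := fun _ => C)
  · filter_upwards [eventually_mem_nhdsWithin] with x hx
    exact ((integrandOn hfc hx).aestronglyMeasurable (measurableSet_cube d))
  · filter_upwards [eventually_mem_nhdsWithin] with x hx
    filter_upwards [ae_restrict_mem (measurableSet_cube d)] with y hy
    exact hC _ (mix_mem hx hy)
  · have : IntegrableOn (fun _ => C) (cube d) volume := by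
      rw [integrableOn_const_iff]
      right
      rw [volume_cube]
      exact ENNReal.one_lt_top
    exact this
  · filter_upwards [ae_restrict_mem (measurableSet_cube d)] with y hy
    exact (hfc _ (mix_mem hx0 hy)).comp (mix_continuous' j y).continuousWithinAt
      (fun x hx => mix_mem hx hy)

lemma sFun_top (x : Fin d → ℝ) : sFun d f d x = f x := by
  unfold sFun
  have : (fun y : Fin d → ℝ => f (fun i => if (i : ℕ) < d then x i else y i))
      = fun _ => f x := by
    funext y
    congr 1
    funext i
    rw [if_pos i.isLt]
  rw [this, setIntegral_const, measureReal_def, volume_cube]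
  simp

lemma sFun_zero_eq (x : Fin d → ℝ) : sFun d f 0 x = ∫ y in cube d, f y := by
  unfold sFun
  congr 1

end sFunBasic

/-! ### The Fubini (marginal) lemma -/

lemma marg {n : ℕ} (F : (Fin (n+1) → ℝ) → ℝ) (hF : ContinuousOn F (cube (n+1)))
    (j : Fin (n+1)) :
    ∫ y in cube (n+1), F y
      = ∫ s in Set.Icc (0:ℝ) 1, ∫ y in cube (n+1), F (Function.update y j s) := by
  set e := MeasurableEquiv.piFinSuccAbove (fun _ : Fin (n+1) => ℝ) j with he
  have hesymm : ∀ p : ℝ × (Fin n → ℝ), e.symm p = j.insertNth p.1 p.2 := by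
    intro p; rfl
  set T : Set (ℝ × (Fin n → ℝ)) := Set.Icc (0:ℝ) 1 ×ˢ cube n with hT
  have hTmeas : MeasurableSet T := measurableSet_Icc.prod (measurableSet_cube n)
  have hTcomp : IsCompact T := isCompact_Icc.prod (isCompact_cube n)
  have hpre : e.symm ⁻¹' cube (n+1) = T := by
    ext p
    rw [Set.mem_preimage, hesymm, mem_cube]
    constructor
    · intro h
      refine ⟨?_, ?_⟩
      · have := h j; rwa [Fin.insertNth_apply_same] at this
      · rw [mem_cube]; intro k
        have := h (j.succAbove k); rwa [Fin.insertNth_apply_succAbove] at this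
    · rintro ⟨h1, h2⟩ i
      by_cases hij : i = j
      · subst hij; rwa [Fin.insertNth_apply_same]
      · obtain ⟨k, rfl⟩ := Fin.exists_succAbove_eq hij
        rw [Fin.insertNth_apply_succAbove]; exact mem_cube.1 h2 k
  have hesymmc : Continuous (e.symm : ℝ × (Fin n → ℝ) → (Fin (n+1) → ℝ)) := by
    have : (e.symm : ℝ × (Fin n → ℝ) → (Fin (n+1) → ℝ))
        = fun p => j.insertNth p.1 p.2 := funext hesymm
    rw [this]
    exact Continuous.finInsertNth (A := fun _ : Fin (n+1) => ℝ) j continuous_fst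
      continuous_snd
  have hmp : MeasurePreserving (⇑e.symm) (volume.prod volume) volume :=
    ((volume_preserving_piFinSuccAbove (fun _ : Fin (n+1) => ℝ) j)).symm e
  have key : ∀ G : (Fin (n+1) → ℝ) → ℝ,
      ∫ y in cube (n+1), G y = ∫ p in T, G (e.symm p) ∂(volume.prod volume) := by
    intro G
    rw [← integral_indicator (measurableSet_cube (n+1)),
        ← hmp.integral_comp e.symm.measurableEmbedding,
        ← integral_indicator hTmeas]
    congr 1
    funext p
    by_cases hp : p ∈ T
    · rw [Set.indicator_of_mem hp, Set.indicator_of_mem (by rw [← hpre] at hp; exact hp)]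
    · rw [Set.indicator_of_notMem hp,
        Set.indicator_of_notMem (by rw [← hpre] at hp; exact hp)]
  have hmemT : ∀ p : ℝ × (Fin n → ℝ), p ∈ T → e.symm p ∈ cube (n+1) := by
    intro p hp; rw [← hpre] at hp; exact hp
  have hI1 : IntegrableOn (fun p => F (e.symm p)) T (volume.prod volume) :=
    (hF.comp hesymmc.continuousOn hmemT).integrableOn_compact hTcomp
  rw [key F, setIntegral_prod _ hI1]
  rw [setIntegral_congr_fun measurableSet_Icc
    (show Set.EqOn (fun s => ∫ y in cube (n+1), F (Function.update y j s))
      (fun s => ∫ z in cube n, F (e.symm (s, z))) (Set.Icc 0 1) from ?_)]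
  intro s hs
  have hcont2 : Continuous (fun p : ℝ × (Fin n → ℝ) => e.symm (s, p.2)) := by
    have : (fun p : ℝ × (Fin n → ℝ) => e.symm (s, p.2))
        = fun p : ℝ × (Fin n → ℝ) => j.insertNth s p.2 := by
      funext p; rw [hesymm]
    rw [this]
    exact Continuous.finInsertNth (A := fun _ : Fin (n+1) => ℝ) j continuous_const
      continuous_snd
  have hmem2 : ∀ p ∈ T, e.symm (s, p.2) ∈ cube (n+1) := by
    intro p hp
    exact hmemT (s, p.2) ⟨hs, hp.2⟩
  have hI2 : IntegrableOn (fun p => F (e.symm (s, p.2))) T (volume.prod volume) :=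
    (hF.comp hcont2.continuousOn hmem2).integrableOn_compact hTcomp
  have hupd : ∀ p : ℝ × (Fin n → ℝ),
      Function.update (e.symm p) j s = e.symm (s, p.2) := by
    intro p
    rw [hesymm, hesymm]
    exact Fin.update_insertNth (α := fun _ : Fin (n+1) => ℝ) j p.1 s p.2
  calc ∫ y in cube (n+1), F (Function.update y j s)
      = ∫ p in T, F (Function.update (e.symm p) j s) ∂(volume.prod volume) :=
        key (fun y => F (Function.update y j s))
    _ = ∫ p in T, F (e.symm (s, p.2)) ∂(volume.prod volume) := by
        congr 1; funext p; rw [hupd]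
    _ = ∫ s' in Set.Icc (0:ℝ) 1, ∫ z in cube n, F (e.symm (s, z)) := by
        rw [setIntegral_prod _ hI2]
    _ = ∫ z in cube n, F (e.symm (s, z)) := by
        rw [setIntegral_const]
        simp
section Slice

variable {n : ℕ} {f : (Fin (n+1) → ℝ) → ℝ}

lemma update_mem_cube {x : Fin (n+1) → ℝ} (hx : x ∈ cube (n+1)) (j : Fin (n+1))
    {s : ℝ} (hs : s ∈ Set.Icc (0:ℝ) 1) : Function.update x j s ∈ cube (n+1) := by
  rw [mem_cube]
  intro i
  by_cases h : i = j
  · subst h; rwa [Function.update_self]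
  · rw [Function.update_of_ne h]; exact mem_cube.1 hx i

/-- The Fubini recursion for sFun -/
lemma sFun_succ (hfc : ContinuousOn f (cube (n+1))) {x : Fin (n+1) → ℝ}
    (hx : x ∈ cube (n+1)) (j : Fin (n+1)) :
    sFun (n+1) f (j : ℕ) x
      = ∫ s in Set.Icc (0:ℝ) 1, sFun (n+1) f ((j : ℕ) + 1) (Function.update x j s) := by
  have h := marg (fun y => f (fun i => if (i : ℕ) < (j:ℕ) then x i else y i))
    (integrandOn hfc hx) j
  rw [show sFun (n+1) f (j:ℕ) x
    = ∫ y in cube (n+1), f (fun i => if (i : ℕ) < (j:ℕ) then x i else y i) from rfl, h]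
  apply setIntegral_congr_fun measurableSet_Icc
  intro s _
  show (∫ y in cube (n+1), f fun i => if (i:ℕ) < (j:ℕ) then x i else Function.update y j s i)
      = sFun (n+1) f ((j:ℕ)+1) (Function.update x j s)
  unfold sFun
  apply setIntegral_congr_fun (measurableSet_cube (n+1))
  intro y _
  dsimp only
  congr 1
  funext i
  rcases lt_trichotomy (i : ℕ) (j : ℕ) with hlt | heq | hgt
  · have hij : i ≠ j := fun h => by subst h; omega
    rw [if_pos hlt, if_pos (by omega : (i:ℕ) < (j:ℕ)+1), Function.update_of_ne hij]
  · have hij : i = j := Fin.ext heq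
    subst hij
    rw [if_neg (by omega), if_pos (by omega), Function.update_self, Function.update_self]
  · have hij : i ≠ j := fun h => by subst h; omega
    rw [if_neg (by omega), if_neg (by omega), Function.update_of_ne hij]

/-- the slice integrand -/
lemma g_contOn (hfc : ContinuousOn f (cube (n+1))) {x : Fin (n+1) → ℝ}
    (hx : x ∈ cube (n+1)) (j : Fin (n+1)) (k : ℕ) :
    ContinuousOn (fun s => sFun (n+1) f k (Function.update x j s)) (Set.Icc 0 1) := by
  apply (sFun_continuousOn hfc k).comp
  · apply Continuous.continuousOn
    apply continuous_pi
    intro i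
    have : (fun s : ℝ => Function.update x j s i) = fun s => if i = j then s else x i := by
      funext s
      rw [Function.update_apply]
    rw [this]
    split
    · exact continuous_id
    · exact continuous_const
  · intro s hs
    exact update_mem_cube hx j hs

lemma g_nonneg (hfnn : ∀ x ∈ cube (n+1), 0 ≤ f x) {x : Fin (n+1) → ℝ}
    (hx : x ∈ cube (n+1)) (j : Fin (n+1)) (k : ℕ) :
    ∀ s ∈ Set.Icc (0:ℝ) 1, 0 ≤ sFun (n+1) f k (Function.update x j s) :=
  fun _ hs => sFun_nonneg hfnn k (update_mem_cube hx j hs)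

/-- The slab argument: if sFun j x > 0 then on any nondegenerate subinterval the
slice integrand is somewhere positive. -/
lemma slab (hfc : ContinuousOn f (cube (n+1))) (hfnn : ∀ x ∈ cube (n+1), 0 ≤ f x)
    (hA : AssumptionA (n+1) f) {x : Fin (n+1) → ℝ} (hx : x ∈ cube (n+1)) (j : Fin (n+1))
    {t1 t2 : ℝ} (h1 : t1 ∈ Set.Icc (0:ℝ) 1) (h2 : t2 ∈ Set.Icc (0:ℝ) 1) (h12 : t1 < t2)
    (hcpos : 0 < sFun (n+1) f (j:ℕ) x) :
    ∃ s0 ∈ Set.Icc t1 t2, 0 < sFun (n+1) f ((j:ℕ)+1) (Function.update x j s0) := by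
  by_contra hcon
  push_neg at hcon
  have hIccsub : Set.Icc t1 t2 ⊆ Set.Icc (0:ℝ) 1 := Set.Icc_subset_Icc h1.1 h2.2
  -- the slice integrand vanishes identically on [t1,t2]
  have hzero : ∀ s ∈ Set.Icc t1 t2, ∀ y ∈ cube (n+1),
      f (fun i => if (i:ℕ) < (j:ℕ)+1 then Function.update x j s i else y i) = 0 := by
    intro s hs
    have hxs : Function.update x j s ∈ cube (n+1) := update_mem_cube hx j (hIccsub hs)
    apply zeroCube (integrandOn hfc hxs) (fun y hy => hfnn _ (mix_mem hxs hy))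
    have h0 : sFun (n+1) f ((j:ℕ)+1) (Function.update x j s) = 0 :=
      le_antisymm (hcon s hs) (sFun_nonneg hfnn _ hxs)
    exact h0
  -- hence by Assumption A the integrand vanishes for all s ∈ [0,1]
  have hzero' : ∀ s ∈ Set.Icc (0:ℝ) 1, ∀ y ∈ cube (n+1),
      f (fun i => if (i:ℕ) < (j:ℕ)+1 then Function.update x j s i else y i) = 0 := by
    intro s hs y hy
    -- M y s = update (M y t1) j s
    set M : ℝ → (Fin (n+1) → ℝ) := fun s =>
      (fun i => if (i:ℕ) < (j:ℕ)+1 then Function.update x j s i else y i) with hM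
    have hMupd : ∀ s' : ℝ, M s' = Function.update (M t1) j s' := by
      intro s'
      funext i
      by_cases hij : i = j
      · subst hij
        rw [Function.update_self, hM]
        dsimp only
        rw [if_pos (by omega), Function.update_self]
      · rw [Function.update_of_ne hij, hM]
        dsimp only
        by_cases hlt : (i:ℕ) < (j:ℕ)+1
        · rw [if_pos hlt, if_pos hlt, Function.update_of_ne hij, Function.update_of_ne hij]
        · rw [if_neg hlt, if_neg hlt]
    have hMt1 : M t1 ∈ cube (n+1) :=
      mix_mem (update_mem_cube hx j (hIccsub (Set.left_mem_Icc.2 h12.le))) hy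
    rcases hA.2 j (M t1) hMt1 with hall | hnull
    · have := hall s hs
      rw [← hMupd s] at this
      exact this
    · exfalso
      have hsub : Set.Icc t1 t2 ⊆
          {t : ℝ | t ∈ Set.Icc (0:ℝ) 1 ∧ f (Function.update (M t1) j t) = 0} := by
        intro t ht
        refine ⟨hIccsub ht, ?_⟩
        rw [← hMupd t]
        exact hzero t ht y hy
      have : volume (Set.Icc t1 t2) = 0 :=
        measure_mono_null hsub hnull
      rw [Real.volume_Icc] at this
      exact absurd this (ne_of_gt (ENNReal.ofReal_pos.2 (by linarith)))
  -- hence sFun j x = 0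
  have : sFun (n+1) f (j:ℕ) x = 0 := by
    rw [sFun_succ hfc hx j]
    have : ∀ s ∈ Set.Icc (0:ℝ) 1,
        sFun (n+1) f ((j:ℕ)+1) (Function.update x j s) = 0 := by
      intro s hs
      unfold sFun
      rw [setIntegral_congr_fun (measurableSet_cube (n+1))
        (show Set.EqOn _ (fun _ => (0:ℝ)) (cube (n+1)) from fun y hy => hzero' s hs y hy)]
      simp
    rw [setIntegral_congr_fun measurableSet_Icc
      (show Set.EqOn _ (fun _ => (0:ℝ)) (Set.Icc (0:ℝ) 1) from fun s hs => this s hs)]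
    simp
  exact absurd this (ne_of_gt hcpos)

/-- positivity chain -/
lemma chain (hfc : ContinuousOn f (cube (n+1))) (hfnn : ∀ x ∈ cube (n+1), 0 ≤ f x)
    {x : Fin (n+1) → ℝ} (hx : x ∈ cube (n+1)) (hpos : 0 < sFun (n+1) f n x) :
    ∀ k : ℕ, k ≤ n → 0 < sFun (n+1) f k x := by
  have main : ∀ m : ℕ, ∀ k : ℕ, k + m = n → 0 < sFun (n+1) f k x := by
    intro m
    induction m with
    | zero => intro k hk; rw [show k = n by omega]; exact hpos
    | succ m IH =>
      intro k hk
      have hn1 : 0 < sFun (n+1) f (k+1) x := IH (k+1) (by omega)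
      set j : Fin (n+1) := ⟨k, by omega⟩ with hj
      have hjk : (j : ℕ) = k := rfl
      rw [← hjk, sFun_succ hfc hx j]
      apply pos1D zero_lt_one (g_contOn hfc hx j _) (g_nonneg hfnn hx j _)
        (mem_cube.1 hx j)
      rw [hjk, Function.update_eq_self j x]
      exact hn1
  intro k hk
  exact main (n - k) k (by omega)

end Slice
section SliceMain

variable {n : ℕ} {f : (Fin (n+1) → ℝ) → ℝ}

lemma slice_eq {x : Fin (n+1) → ℝ} {j : Fin (n+1)}
    (hc : 0 < sFun (n+1) f (j:ℕ) x) (t : ℝ) :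
    KRinv (n+1) f (Function.update x j t) j
      = (∫ u in (0:ℝ)..t, sFun (n+1) f ((j:ℕ)+1) (Function.update x j u))
          / sFun (n+1) f (j:ℕ) x := by
  unfold KRinv
  rw [sFun_update_of_le le_rfl x rfl t, Function.update_self]
  simp only [Function.update_idem]
  rw [if_pos hc]

lemma sliceMain (hfc : ContinuousOn f (cube (n+1))) (hfnn : ∀ x ∈ cube (n+1), 0 ≤ f x)
    (hA : AssumptionA (n+1) f) {x : Fin (n+1) → ℝ} (hx : x ∈ cube (n+1)) (j : Fin (n+1))
    (hc : 0 < sFun (n+1) f (j:ℕ) x) :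
    StrictMonoOn (fun t => KRinv (n+1) f (Function.update x j t) j) (Set.Icc (0:ℝ) 1) ∧
    Set.BijOn (fun t => KRinv (n+1) f (Function.update x j t) j) (Set.Icc (0:ℝ) 1)
      (Set.Icc (0:ℝ) 1) ∧
    ∀ b ∈ Set.Icc (0:ℝ) 1,
      HasDerivWithinAt (fun t => KRinv (n+1) f (Function.update x j t) j)
        (sFun (n+1) f ((j:ℕ)+1) (Function.update x j b) / sFun (n+1) f (j:ℕ) x)
        (Set.Icc (0:ℝ) 1) b := by
  set c := sFun (n+1) f (j:ℕ) x with hcdef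
  set g : ℝ → ℝ := fun u => sFun (n+1) f ((j:ℕ)+1) (Function.update x j u) with hgdef
  set S : ℝ → ℝ := fun t => KRinv (n+1) f (Function.update x j t) j with hSdef
  have hgc : ContinuousOn g (Set.Icc 0 1) := g_contOn hfc hx j _
  have hclcont : Continuous (fun u : ℝ => max 0 (min 1 u)) :=
    continuous_const.max (continuous_const.min continuous_id)
  have hclmem : ∀ u : ℝ, max 0 (min 1 u) ∈ Set.Icc (0:ℝ) 1 :=
    fun u => ⟨le_max_left _ _, max_le zero_le_one (min_le_left _ _)⟩
  set ghat : ℝ → ℝ := fun u => g (max 0 (min 1 u)) with hghdef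
  have hghatc : Continuous ghat := hgc.comp_continuous hclcont hclmem
  have heq : Set.EqOn g ghat (Set.Icc 0 1) := by
    intro u hu
    rw [hghdef]
    dsimp only
    rw [min_eq_right hu.2, max_eq_right hu.1]
  have hgnn : ∀ u, 0 ≤ ghat u := fun u => g_nonneg hfnn hx j _ _ (hclmem u)
  set Φ : ℝ → ℝ := fun u => ∫ v in (0:ℝ)..u, ghat v with hΦdef
  have hΦd : ∀ b, HasDerivAt Φ (ghat b) b := by
    intro b
    exact intervalIntegral.integral_hasDerivAt_right
      (hghatc.intervalIntegrable _ _)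
      hghatc.stronglyMeasurable.stronglyMeasurableAtFilter
      hghatc.continuousAt
  have hΦc : Continuous Φ := continuous_iff_continuousAt.2 fun b => (hΦd b).continuousAt
  have hSeq : ∀ t ∈ Set.Icc (0:ℝ) 1, S t = Φ t / c := by
    intro t ht
    rw [hSdef]
    dsimp only
    rw [slice_eq hc t]
    congr 1
    apply intervalIntegral.integral_congr
    intro u hu
    rw [Set.uIcc_of_le ht.1] at hu
    exact heq ⟨hu.1, hu.2.trans ht.2⟩
  have hdiff : ∀ t1 ∈ Set.Icc (0:ℝ) 1, ∀ t2 ∈ Set.Icc (0:ℝ) 1, t1 < t2 → Φ t1 < Φ t2 := by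
    intro t1 h1 t2 h2 h12
    have hsub : Φ t2 - Φ t1 = ∫ u in t1..t2, ghat u := by
      rw [hΦdef]
      dsimp only
      rw [intervalIntegral.integral_interval_sub_left (hghatc.intervalIntegrable _ _)
        (hghatc.intervalIntegrable _ _)]
    have hIcc : (∫ u in t1..t2, ghat u) = ∫ u in Set.Icc t1 t2, ghat u := by
      rw [intervalIntegral.integral_of_le h12.le, ← integral_Icc_eq_integral_Ioc]
    obtain ⟨s0, hs0, hs0pos⟩ := slab hfc hfnn hA hx j h1 h2 h12 hc
    have hs0' : s0 ∈ Set.Icc (0:ℝ) 1 := Set.Icc_subset_Icc h1.1 h2.2 hs0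
    have hghs0 : 0 < ghat s0 := by
      rw [← heq hs0']
      exact hs0pos
    have hpos : 0 < ∫ u in Set.Icc t1 t2, ghat u :=
      pos1D h12 hghatc.continuousOn (fun u _ => hgnn u) hs0 hghs0
    have : 0 < Φ t2 - Φ t1 := by rw [hsub, hIcc]; exact hpos
    linarith
  have hΦ0 : Φ 0 = 0 := intervalIntegral.integral_same
  have hΦ1 : Φ 1 = c := by
    rw [hΦdef]
    dsimp only
    rw [intervalIntegral.integral_of_le zero_le_one, ← integral_Icc_eq_integral_Ioc,
      ← setIntegral_congr_fun measurableSet_Icc heq, hcdef, sFun_succ hfc hx j]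
  have hmono : StrictMonoOn S (Set.Icc (0:ℝ) 1) := by
    intro t1 h1 t2 h2 h12
    rw [hSeq t1 h1, hSeq t2 h2, div_lt_div_iff₀ hc hc]
    nlinarith [hdiff t1 h1 t2 h2 h12]
  have hmapsTo : Set.MapsTo S (Set.Icc (0:ℝ) 1) (Set.Icc (0:ℝ) 1) := by
    intro t ht
    rw [hSeq t ht]
    constructor
    · apply div_nonneg _ hc.le
      rcases eq_or_lt_of_le ht.1 with h | h
      · rw [← h, hΦ0]
      · rw [← hΦ0]; exact (hdiff 0 ⟨le_rfl, zero_le_one⟩ t ht h).le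
    · rw [div_le_one hc]
      rcases eq_or_lt_of_le ht.2 with h | h
      · rw [h, hΦ1]
      · rw [← hΦ1]; exact (hdiff t ht 1 ⟨zero_le_one, le_rfl⟩ h).le
  have hScont : ContinuousOn S (Set.Icc (0:ℝ) 1) :=
    ((hΦc.div_const c).continuousOn).congr hSeq
  have hS0 : S 0 = 0 := by
    rw [hSeq 0 ⟨le_rfl, zero_le_one⟩, hΦ0, zero_div]
  have hS1 : S 1 = 1 := by
    rw [hSeq 1 ⟨zero_le_one, le_rfl⟩, hΦ1, div_self hc.ne']
  have hsurj : Set.SurjOn S (Set.Icc (0:ℝ) 1) (Set.Icc (0:ℝ) 1) := by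
    intro y hy
    apply intermediate_value_Icc zero_le_one hScont
    rw [hS0, hS1]
    exact hy
  refine ⟨hmono, ⟨hmapsTo, hmono.injOn, hsurj⟩, ?_⟩
  intro b hb
  have h1 : HasDerivAt (fun u => Φ u / c) (ghat b / c) b := (hΦd b).div_const c
  have h2 : HasDerivWithinAt (fun u => Φ u / c) (ghat b / c) (Set.Icc (0:ℝ) 1) b :=
    h1.hasDerivWithinAt
  have h3 : HasDerivWithinAt S (ghat b / c) (Set.Icc (0:ℝ) 1) b :=
    h2.congr (fun y hy => hSeq y hy) (hSeq b hb)
  rw [show sFun (n+1) f ((j:ℕ)+1) (Function.update x j b) = ghat b from heq hb]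
  exact h3

lemma part2full (hfc : ContinuousOn f (cube (n+1))) (hfnn : ∀ x ∈ cube (n+1), 0 ≤ f x)
    (hA : AssumptionA (n+1) f) (j : Fin (n+1)) {x : Fin (n+1) → ℝ} (hx : x ∈ cube (n+1)) :
    StrictMonoOn (fun t => KRinv (n+1) f (Function.update x j t) j) (Set.Icc (0:ℝ) 1) ∧
    Set.BijOn (fun t => KRinv (n+1) f (Function.update x j t) j) (Set.Icc (0:ℝ) 1)
      (Set.Icc (0:ℝ) 1) := by
  rcases (sFun_nonneg hfnn (j:ℕ) hx).lt_or_eq with hpos | hzero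
  · exact ⟨(sliceMain hfc hfnn hA hx j hpos).1, (sliceMain hfc hfnn hA hx j hpos).2.1⟩
  · have hfun : (fun t => KRinv (n+1) f (Function.update x j t) j) = fun t => t := by
      funext t
      unfold KRinv
      rw [sFun_update_of_le le_rfl x rfl t, if_neg (by rw [← hzero]; exact lt_irrefl 0),
        Function.update_self]
    rw [hfun]
    exact ⟨fun a _ b _ h => h,
      ⟨fun t ht => ht, fun a _ b _ h => h, fun t ht => ⟨t, ht, rfl⟩⟩⟩

end SliceMain
section Triang

lemma KRinv_congr {d : ℕ} {f : (Fin d → ℝ) → ℝ} {j : Fin d} {x y : Fin d → ℝ}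
    (h : ∀ i : Fin d, i ≤ j → x i = y i) : KRinv d f x j = KRinv d f y j := by
  have hlt : ∀ i : Fin d, (i:ℕ) < (j:ℕ) → x i = y i :=
    fun i hi => h i (Fin.le_def.2 hi.le)
  have h1 : sFun d f (j:ℕ) x = sFun d f (j:ℕ) y := sFun_congr hlt
  have h2 : ∀ t : ℝ, sFun d f ((j:ℕ)+1) (Function.update x j t)
      = sFun d f ((j:ℕ)+1) (Function.update y j t) := by
    intro t
    apply sFun_congr
    intro i hi
    by_cases hij : i = j
    · subst hij; rw [Function.update_self, Function.update_self]
    · have hv : (i:ℕ) ≠ (j:ℕ) := fun hh => hij (Fin.ext hh)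
      rw [Function.update_of_ne hij, Function.update_of_ne hij]
      exact h i (Fin.le_def.2 (by omega))
  have h3 : x j = y j := h j le_rfl
  unfold KRinv
  rw [h1, h3]
  simp only [h2]

end Triang

open Classical in
noncomputable def KRsol (d : ℕ) (f : (Fin d → ℝ) → ℝ) (z : Fin d → ℝ) (j : ℕ) : ℝ :=
  if hj : j < d then
    if hE : ∃ t ∈ Set.Icc (0:ℝ) 1,
        KRinv d f (Function.update
          (fun i : Fin d => if hi : (i:ℕ) < j then max 0 (min 1 (KRsol d f z (i:ℕ))) else 1/2)
          ⟨j, hj⟩ t) ⟨j, hj⟩ = z ⟨j, hj⟩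
      then hE.choose else 0
  else 0
termination_by j
decreasing_by all_goals exact hi

lemma KRsol_spec {d : ℕ} (f : (Fin d → ℝ) → ℝ) (z : Fin d → ℝ) (j : ℕ) (hj : j < d)
    (hE : ∃ t ∈ Set.Icc (0:ℝ) 1,
      KRinv d f (Function.update
        (fun i : Fin d => if hi : (i:ℕ) < j then max 0 (min 1 (KRsol d f z (i:ℕ))) else 1/2)
        ⟨j, hj⟩ t) ⟨j, hj⟩ = z ⟨j, hj⟩) :
    KRsol d f z j ∈ Set.Icc (0:ℝ) 1 ∧
    KRinv d f (Function.update
      (fun i : Fin d => if hi : (i:ℕ) < j then max 0 (min 1 (KRsol d f z (i:ℕ))) else 1/2)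
      ⟨j, hj⟩ (KRsol d f z j)) ⟨j, hj⟩ = z ⟨j, hj⟩ := by
  have h : KRsol d f z j = hE.choose := by
    rw [KRsol, dif_pos hj, dif_pos hE]
  rw [h]
  exact ⟨hE.choose_spec.1, hE.choose_spec.2⟩
theorem stmt1 (d : ℕ) (hd : 0 < d) (f : (Fin d → ℝ) → ℝ)
    (hfc : ContinuousOn f (cube d))
    (hfnn : ∀ x ∈ cube d, 0 ≤ f x)
    (hA : AssumptionA d f) :
    (∀ j : Fin d, ∀ x y : Fin d → ℝ, (∀ i : Fin d, i ≤ j → x i = y i) →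
      KRinv d f x j = KRinv d f y j) ∧
    (∀ j : Fin d, ∀ x ∈ cube d,
      StrictMonoOn (fun t => KRinv d f (Function.update x j t) j) (Set.Icc (0:ℝ) 1) ∧
      Set.BijOn (fun t => KRinv d f (Function.update x j t) j) (Set.Icc (0:ℝ) 1)
        (Set.Icc (0:ℝ) 1)) ∧
    Set.BijOn (KRinv d f) (cube d) (cube d) ∧
    volume {x : Fin d → ℝ | x ∈ cube d ∧ sFun d f (d - 1) x = 0} = 0 ∧
    (∀ x ∈ cube d, sFun d f (d - 1) x ≠ 0 →
      ∃ D : Fin d → ℝ,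
        (∀ j : Fin d, HasDerivWithinAt (fun t => KRinv d f (Function.update x j t) j) (D j)
          (Set.Icc (0:ℝ) 1) (x j)) ∧
        ∏ j, D j = f x / ∫ y in cube d, f y) := by
  obtain ⟨n, rfl⟩ : ∃ n, d = n + 1 := ⟨d - 1, (Nat.succ_pred_eq_of_pos hd).symm⟩
  clear hd
  refine ⟨?_, ?_, ?_, ?_, ?_⟩
  · -- Part 1: triangularity
    intro j x y h
    exact KRinv_congr h
  · -- Part 2: slice properties
    intro j x hx
    exact part2full hfc hfnn hA j hx
  · -- Part 3: bijectivity on the cube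
    refine ⟨?_, ?_, ?_⟩
    · -- MapsTo
      intro x hx
      rw [mem_cube]
      intro j
      have h := (part2full hfc hfnn hA j hx).2.mapsTo (mem_cube.1 hx j)
      simp only [Function.update_eq_self] at h
      exact h
    · -- InjOn
      intro x hx y hy hxy
      funext j0
      have key : ∀ k : ℕ, ∀ j : Fin (n+1), (j:ℕ) = k → x j = y j := by
        intro k
        induction k using Nat.strong_induction_on with
        | _ k IH =>
          intro j hjk
          have hlow : ∀ i : Fin (n+1), (i:ℕ) < (j:ℕ) → x i = y i :=
            fun i hi => IH (i:ℕ) (hjk ▸ hi) i rfl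
          have hslice : ∀ t : ℝ, KRinv (n+1) f (Function.update x j t) j
              = KRinv (n+1) f (Function.update y j t) j := by
            intro t
            apply KRinv_congr
            intro i hi
            by_cases hij : i = j
            · subst hij; rw [Function.update_self, Function.update_self]
            · have hv : (i:ℕ) < (j:ℕ) :=
                lt_of_le_of_ne (Fin.le_def.1 hi) (fun hh => hij (Fin.ext hh))
              rw [Function.update_of_ne hij, Function.update_of_ne hij]
              exact hlow i hv
          have hinj := (part2full hfc hfnn hA j hx).2.injOn
          apply hinj (mem_cube.1 hx j) (mem_cube.1 hy j)
          show KRinv (n+1) f (Function.update x j (x j)) j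
            = KRinv (n+1) f (Function.update x j (y j)) j
          rw [Function.update_eq_self, hslice (y j), Function.update_eq_self]
          exact congrFun hxy j
      exact key (j0:ℕ) j0 rfl
    · -- SurjOn
      intro z hz
      set X : Fin (n+1) → ℝ := fun i => KRsol (n+1) f z (i:ℕ) with hX
      have P : ∀ k : ℕ, ∀ j : Fin (n+1), (j:ℕ) = k →
          (X j ∈ Set.Icc (0:ℝ) 1 ∧ KRinv (n+1) f X j = z j) := by
        intro k
        induction k using Nat.strong_induction_on with
        | _ k IH =>
          intro j hjk
          subst hjk
          have hj : (j:ℕ) < n+1 := j.isLt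
          set b : Fin (n+1) → ℝ := fun i : Fin (n+1) =>
            if hi : (i:ℕ) < (j:ℕ) then max 0 (min 1 (KRsol (n+1) f z (i:ℕ))) else 1/2
            with hb
          have hbmem : b ∈ cube (n+1) := by
            rw [mem_cube]
            intro i
            rw [hb]
            dsimp only
            split
            · exact ⟨le_max_left _ _, max_le zero_le_one (min_le_left _ _)⟩
            · norm_num
          have hbX : ∀ i : Fin (n+1), (i:ℕ) < (j:ℕ) → b i = X i := by
            intro i hi
            have hXi : X i ∈ Set.Icc (0:ℝ) 1 := (IH (i:ℕ) hi i rfl).1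
            rw [hb]
            dsimp only
            rw [dif_pos hi]
            show max 0 (min 1 (X i)) = X i
            rw [min_eq_right hXi.2, max_eq_right hXi.1]
          have hE : ∃ t ∈ Set.Icc (0:ℝ) 1,
              KRinv (n+1) f (Function.update b ⟨(j:ℕ), hj⟩ t) ⟨(j:ℕ), hj⟩
                = z ⟨(j:ℕ), hj⟩ := by
            simp only [Fin.eta]
            obtain ⟨t, ht, hts⟩ :=
              (part2full hfc hfnn hA j hbmem).2.surjOn (mem_cube.1 hz j)
            exact ⟨t, ht, hts⟩
          have hspec := KRsol_spec f z (j:ℕ) hj (by rw [hb] at hE; exact hE)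
          have hXj : X j ∈ Set.Icc (0:ℝ) 1 := hspec.1
          refine ⟨hXj, ?_⟩
          have hagree : ∀ i : Fin (n+1), i ≤ j →
              X i = Function.update b j (X j) i := by
            intro i hi
            by_cases hij : i = j
            · subst hij; rw [Function.update_self]
            · have hv : (i:ℕ) < (j:ℕ) :=
                lt_of_le_of_ne (Fin.le_def.1 hi) (fun hh => hij (Fin.ext hh))
              rw [Function.update_of_ne hij, hbX i hv]
          have htri := KRinv_congr (f := f) (j := j) hagree
          rw [htri]
          have hspec2 := hspec.2
          simp only [Fin.eta] at hspec2
          rw [← hb] at hspec2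
          exact hspec2
      have hXmem : X ∈ cube (n+1) := mem_cube.2 fun i => (P (i:ℕ) i rfl).1
      exact ⟨X, hXmem, funext fun j => (P (j:ℕ) j rfl).2⟩
  · -- Part 4: null set
    simp only [Nat.add_sub_cancel]
    apply measure_mono_null _ hA.1
    intro x hx
    obtain ⟨hxc, hx0⟩ := hx
    refine ⟨hxc, ?_⟩
    set jl : Fin (n+1) := ⟨n, Nat.lt_succ_self n⟩ with hjl
    set F1 : ℝ → ℝ := fun s => f (Function.update x jl s) with hF1
    have hFeq : (fun s => sFun (n+1) f ((jl:ℕ)+1) (Function.update x jl s)) = F1 := by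
      funext s
      rw [hF1]
      show sFun (n+1) f (n+1) (Function.update x jl s) = _
      rw [sFun_top]
    have hint : sFun (n+1) f n x = ∫ s in Set.Icc (0:ℝ) 1, F1 s := by
      have := sFun_succ hfc hxc jl
      rw [show ((jl:ℕ)) = n from rfl] at this
      rw [this]
      apply setIntegral_congr_fun measurableSet_Icc
      intro s _
      exact congrFun hFeq s
    have hF1c : ContinuousOn F1 (Set.Icc 0 1) := by
      rw [← hFeq]
      exact g_contOn hfc hxc jl _
    have hF1nn : ∀ s ∈ Set.Icc (0:ℝ) 1, 0 ≤ F1 s := by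
      rw [← hFeq]
      exact g_nonneg hfnn hxc jl _
    have hz : ∫ s in Set.Icc (0:ℝ) 1, F1 s = 0 := by rw [← hint]; exact hx0
    have := zero1D zero_lt_one hF1c hF1nn hz (x jl) (mem_cube.1 hxc jl)
    rw [hF1] at this
    simp only [Function.update_eq_self] at this
    exact this
  · -- Part 5: derivatives
    intro x hx hne
    simp only [Nat.add_sub_cancel] at hne
    have hposn : 0 < sFun (n+1) f n x :=
      lt_of_le_of_ne (sFun_nonneg hfnn n hx) (Ne.symm hne)
    have hall : ∀ j : Fin (n+1), 0 < sFun (n+1) f (j:ℕ) x :=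
      fun j => chain hfc hfnn hx hposn (j:ℕ) (Nat.lt_succ_iff.1 j.isLt)
    refine ⟨fun j => sFun (n+1) f ((j:ℕ)+1) x / sFun (n+1) f (j:ℕ) x, ?_, ?_⟩
    · intro j
      have hD := (sliceMain hfc hfnn hA hx j (hall j)).2.2 (x j) (mem_cube.1 hx j)
      rwa [Function.update_eq_self] at hD
    · have hprod : ∀ m : ℕ, m ≤ n+1 →
          ∏ i ∈ Finset.range m, (sFun (n+1) f (i+1) x / sFun (n+1) f i x)
            = sFun (n+1) f m x / sFun (n+1) f 0 x := by
        intro m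
        induction m with
        | zero =>
          intro _
          have h0 : sFun (n+1) f 0 x ≠ 0 := ne_of_gt (hall ⟨0, Nat.succ_pos n⟩)
          rw [Finset.prod_range_zero, div_self h0]
        | succ m IH =>
          intro hm
          have hGm : sFun (n+1) f m x ≠ 0 := ne_of_gt (hall ⟨m, by omega⟩)
          have hG0 : sFun (n+1) f 0 x ≠ 0 := ne_of_gt (hall ⟨0, Nat.succ_pos n⟩)
          rw [Finset.prod_range_succ, IH (by omega)]
          field_simp
      calc ∏ j : Fin (n+1), (sFun (n+1) f ((j:ℕ)+1) x / sFun (n+1) f (j:ℕ) x)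
          = ∏ i ∈ Finset.range (n+1), (sFun (n+1) f (i+1) x / sFun (n+1) f i x) :=
            Fin.prod_univ_eq_prod_range (fun i => sFun (n+1) f (i+1) x / sFun (n+1) f i x) (n+1)
        _ = sFun (n+1) f (n+1) x / sFun (n+1) f 0 x := hprod (n+1) le_rfl
        _ = f x / ∫ y in cube (n+1), f y := by rw [sFun_top, sFun_zero_eq]
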